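/- For each d ≥ 2, Σ_{i=1}^{d+1} i² = (d+1)(d+2)(2d+3)/6, and consequently for the flat arc on d+2 points with gap sequence (1, 3, 5, …, d+1, …, 6, 4, 2), any plane spanning tree of diameter at most d has length at most |T_opt| − 1 = (d+1)(d+2)(2d+3)/6 − 1, where T_opt (the unique longest plane tree) is a path of graph-diameter d+1 and length Σ_{i=1}^{d+1} i². -/

import Mathlib

/-- The unimodal gap sequence `(1, 3, 5, …, d+1, …, 6, 4, 2)` (for `i = 1, …, d+1`). -/
def gapseq (d i : ℕ) : ℕ := if 2 * i ≤ d + 2 then 2 * i - 1 else 2 * (d + 2 - i)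

/-- x-coordinates of the `d+2` points of the flat arc: prefix sums of the gap sequence. -/
def xcoord (d j : ℕ) : ℕ := ∑ i ∈ Finset.Icc 1 j, gapseq d i

/-- Length of a spanning tree on the flat arc: sum over edges of the spanned distance. -/
noncomputable def flatLen (d : ℕ) (T : SimpleGraph (Fin (d + 2))) : ℕ :=
  ∑ᶠ e ∈ T.edgeSet,
    Sym2.lift ⟨fun a b : Fin (d + 2) =>
        max (xcoord d a) (xcoord d b) - min (xcoord d a) (xcoord d b),
      fun a b => by dsimp; rw [Nat.max_comm, Nat.min_comm]⟩ e

namespace Stmt14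
open Finset
attribute [local instance] Classical.propDecidable
set_option linter.unusedSectionVars false
set_option linter.unusedVariables false
set_option maxHeartbeats 1000000

lemma six_sq (N : ℕ) : 6 * ∑ i ∈ Finset.Icc 1 N, i ^ 2 = N * (N+1) * (2*N+1) := by
  induction N with
  | zero => simp
  | succ n ih =>
    rw [Finset.sum_Icc_succ_top (by omega), Nat.mul_add, ih]
    ring

lemma gauss (a b : ℕ) (h : a ≤ b + 1) :
    2 * (∑ i ∈ Finset.Icc a b, i) + a * (a - 1) = b * (b + 1) := by
  induction b with
  | zero => interval_cases a <;> simp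
  | succ n ih =>
    rcases Nat.eq_or_lt_of_le h with h1 | h1
    · rw [← h1, Finset.Icc_eq_empty (by omega)]
      subst h1
      simp [Nat.add_sub_cancel]
      ring
    · have ha : a ≤ n + 1 := by omega
      rw [Finset.sum_Icc_succ_top ha, Nat.mul_add]
      have := ih ha
      have hr : (n+1) * (n+1+1) = n * (n+1) + 2*(n+1) := by ring
      omega

lemma sum_Icc_shift (N k : ℕ) (h1 : 1 ≤ k) (h2 : k ≤ N) :
    (∑ j ∈ Finset.Icc (N+1-k) N, j) = (∑ j ∈ Finset.Icc (N-k) (N-1), j) + k := by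
  have hm := Finset.map_add_right_Icc (N-k) (N-1) 1
  have e1 : N - k + 1 = N + 1 - k := by omega
  have e2 : N - 1 + 1 = N := by omega
  rw [e1, e2] at hm
  rw [← hm, Finset.sum_map]
  simp only [addRightEmbedding_apply]
  rw [Finset.sum_add_distrib, Finset.sum_const, Nat.card_Icc, smul_eq_mul, mul_one]
  congr 1
  omega

/-- L1 : top-k sum bound -/
lemma sum_le_top (N : ℕ) (A : Finset ℕ) (hA : A ⊆ Finset.Icc 1 N) :
    (∑ a ∈ A, a) ≤ ∑ j ∈ Finset.Icc (N+1-A.card) N, j := by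
  induction N generalizing A with
  | zero =>
    have : A = ∅ := Finset.subset_empty.mp (by simpa using hA)
    simp [this]
  | succ n ih =>
    have hcard : A.card ≤ n + 1 := by
      calc A.card ≤ (Finset.Icc 1 (n+1)).card := Finset.card_le_card hA
        _ = n + 1 := by simp [Nat.card_Icc]
    by_cases hmem : n + 1 ∈ A
    · have hA' : A.erase (n+1) ⊆ Finset.Icc 1 n := by
        intro a ha
        have h1 := Finset.mem_of_mem_erase ha
        have h2 := Finset.ne_of_mem_erase ha
        have := hA h1; simp at this ⊢; omega
      have hc : 1 ≤ A.card := Finset.card_pos.mpr ⟨_, hmem⟩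
      have hce : (A.erase (n+1)).card = A.card - 1 := Finset.card_erase_of_mem hmem
      have := ih (A.erase (n+1)) hA'
      rw [hce] at this
      have hsplit : (∑ a ∈ A, a) = (n+1) + ∑ a ∈ A.erase (n+1), a :=
        (Finset.add_sum_erase _ _ hmem).symm
      have e5 : n+1+1-A.card = n+1-(A.card-1) := by omega
      rw [Finset.sum_Icc_succ_top (show n+1+1-A.card ≤ n+1 by omega), hsplit, e5]
      omega
    · have hA' : A ⊆ Finset.Icc 1 n := by
        intro a ha; have := hA ha; simp at this ⊢
        have : a ≠ n+1 := fun h => hmem (h ▸ ha)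
        omega
      have := ih A hA'
      have hcard' : A.card ≤ n := by
        calc A.card ≤ (Finset.Icc 1 n).card := Finset.card_le_card hA'
          _ = n := by simp [Nat.card_Icc]
      by_cases hc0 : A.card = 0
      · simp [Finset.card_eq_zero.mp hc0]
      · have hshift := sum_Icc_shift (n+1) A.card (by omega) (by omega)
        have e3 : n + 1 - 1 = n := by omega
        rw [e3] at hshift
        omega

lemma top_card (N k : ℕ) (A : Finset ℕ) (hA : A ⊆ Finset.Icc 1 N) (hk : A.card ≤ k)
    (hkN : k ≤ N) (hsum : (∑ a ∈ A, a) = ∑ j ∈ Finset.Icc (N+1-k) N, j) : A.card = k := by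
  by_contra hne
  have hlt : A.card < k := by omega
  have h1 := sum_le_top N A hA
  have hsplit : (∑ j ∈ Finset.Icc (N+1-k) N, j)
      = (∑ j ∈ Finset.Ioc (N-k) (N-A.card), j) + ∑ j ∈ Finset.Icc (N+1-A.card) N, j := by
    have e1 : Finset.Icc (N+1-k) N = Finset.Ioc (N-k) N := by ext x; simp; omega
    have e2 : Finset.Icc (N+1-A.card) N = Finset.Ioc (N-A.card) N := by ext x; simp; omega
    rw [e1, e2, Finset.sum_Ioc_consecutive _ (by omega) (by omega)]
  have hmem : N - A.card ∈ Finset.Ioc (N-k) (N-A.card) := by simp; omega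
  have hpos : N - A.card ≤ ∑ j ∈ Finset.Ioc (N-k) (N-A.card), j :=
    Finset.single_le_sum (fun j _ => Nat.zero_le j) hmem
  omega

lemma top_eq (k : ℕ) : ∀ (N : ℕ) (A : Finset ℕ), A ⊆ Finset.Icc 1 N → A.card ≤ k →
    k ≤ N → (∑ a ∈ A, a) = (∑ j ∈ Finset.Icc (N+1-k) N, j) →
    A = Finset.Icc (N+1-k) N := by
  induction k with
  | zero =>
    intro N A hA hk hkN hsum
    have : A = ∅ := Finset.card_eq_zero.mp (by omega)
    rw [this, Finset.Icc_eq_empty (by omega)]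
  | succ k ih =>
    intro N A hA hk hkN hsum
    have hcard : A.card = k + 1 := top_card N (k+1) A hA hk hkN hsum
    have hNmem : N ∈ A := by
      by_contra hN
      have hA' : A ⊆ Finset.Icc 1 (N-1) := by
        intro a ha; have h := hA ha; simp at h ⊢
        have : a ≠ N := fun h' => hN (h' ▸ ha)
        omega
      have h1 := sum_le_top (N-1) A hA'
      rw [hcard] at h1
      have h2 := sum_Icc_shift N (k+1) (by omega) (by omega)
      have e1 : N - 1 + 1 - (k+1) = N - (k+1) := by omega
      rw [e1] at h1
      omega
    have hA' : A.erase N ⊆ Finset.Icc 1 (N-1) := by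
      intro a ha
      have h1 := Finset.mem_of_mem_erase ha
      have h2 := Finset.ne_of_mem_erase ha
      have := hA h1; simp at this ⊢; omega
    have hce : (A.erase N).card = k := by rw [Finset.card_erase_of_mem hNmem]; omega
    have hsplit : (∑ a ∈ A, a) = N + ∑ a ∈ A.erase N, a := (Finset.add_sum_erase _ _ hNmem).symm
    have htop : (∑ j ∈ Finset.Icc (N+1-(k+1)) N, j)
        = (∑ j ∈ Finset.Icc (N+1-(k+1)) (N-1), j) + N := by
      have e2 : N = (N-1) + 1 := by omega
      rw [e2, Finset.sum_Icc_succ_top (by omega), ← e2]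
    have hsum' : (∑ a ∈ A.erase N, a) = ∑ j ∈ Finset.Icc ((N-1)+1-k) (N-1), j := by
      have e3 : (N-1)+1-k = N+1-(k+1) := by omega
      rw [e3]; omega
    have := ih (N-1) (A.erase N) hA' (by omega) (by omega) hsum'
    have hAeq : A = insert N (A.erase N) := (Finset.insert_erase hNmem).symm
    rw [hAeq, this]
    have e4 : Finset.Icc (N+1-(k+1)) N = insert N (Finset.Icc ((N-1)+1-k) (N-1)) := by
      ext x; simp; omega
    rw [e4]

lemma sum_u (N : ℕ) :
    (∑ m ∈ Finset.Icc 1 N, ∑ j ∈ Finset.Icc m N, j) = ∑ i ∈ Finset.Icc 1 N, i ^ 2 := by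
  have hsum : ∑ m ∈ Finset.Icc 1 N, (2 * (∑ j ∈ Finset.Icc m N, j) + m*(m-1))
      = ∑ _m ∈ Finset.Icc 1 N, N*(N+1) :=
    Finset.sum_congr rfl (fun m hm => by
      refine gauss m N ?_
      simp at hm; omega)
  rw [Finset.sum_add_distrib, ← Finset.mul_sum, Finset.sum_const, Nat.card_Icc,
    smul_eq_mul] at hsum
  have h3 : ∑ m ∈ Finset.Icc 1 N, m^2 = (∑ m ∈ Finset.Icc 1 N, m*(m-1)) + ∑ m ∈ Finset.Icc 1 N, m := by
    rw [← Finset.sum_add_distrib]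
    refine Finset.sum_congr rfl (fun m _ => ?_)
    cases m with
    | zero => simp
    | succ p => have : (p+1)^2 = (p+1)*p + (p+1) := by ring
                simpa using this
  have h4 := gauss 1 N (by omega)
  have h5 := six_sq N
  have key1 : (N + 1 - 1) * (N * (N + 1)) = N * (N * (N+1)) := by
    congr 1
  have key : 6*(N*(N*(N+1))) + 3*(N*(N+1)) = 3*(N*(N+1)*(2*N+1)) := by ring
  omega

lemma g_mem (d i : ℕ) (h1 : 1 ≤ i) (h2 : i ≤ d+1) :
    1 ≤ gapseq d i ∧ gapseq d i ≤ d+1 := by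
  unfold gapseq; split_ifs <;> omega

lemma g_inj (d i j : ℕ) (h1 : 1 ≤ i) (h2 : i ≤ d+1) (h3 : 1 ≤ j) (h4 : j ≤ d+1)
    (h : gapseq d i = gapseq d j) : i = j := by
  unfold gapseq at h; split_ifs at h <;> omega

variable {n : ℕ}

def loV (e : Sym2 (Fin n)) : Fin n :=
  Sym2.lift ⟨fun a b => min a b, fun a b => min_comm a b⟩ e
def hiV (e : Sym2 (Fin n)) : Fin n :=
  Sym2.lift ⟨fun a b => max a b, fun a b => max_comm a b⟩ e
def lo (e : Sym2 (Fin n)) : ℕ := (loV e).val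
def hi (e : Sym2 (Fin n)) : ℕ := (hiV e).val
def gaps (e : Sym2 (Fin n)) : Finset ℕ := Finset.Ioc (lo e) (hi e)
def len (e : Sym2 (Fin n)) : ℕ := hi e - lo e

@[simp] lemma loV_mk (a b : Fin n) : loV s(a,b) = min a b := rfl
@[simp] lemma hiV_mk (a b : Fin n) : hiV s(a,b) = max a b := rfl

lemma edge_repr (e : Sym2 (Fin n)) : e = s(loV e, hiV e) := by
  induction e with
  | _ a b =>
    rcases le_total a b with h | h
    · rw [loV_mk, hiV_mk, min_eq_left h, max_eq_right h]
    · rw [loV_mk, hiV_mk, min_eq_right h, max_eq_left h, Sym2.eq_swap]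

lemma loV_le_hiV (e : Sym2 (Fin n)) : loV e ≤ hiV e := by
  induction e with
  | _ a b => exact min_le_max

/-- an edge is determined by its lo and hi -/
lemma eq_of_lohi {e f : Sym2 (Fin n)} (h1 : lo e = lo f) (h2 : hi e = hi f) : e = f := by
  have e1 : loV e = loV f := Fin.ext h1
  have e2 : hiV e = hiV f := Fin.ext h2
  rw [edge_repr e, edge_repr f, e1, e2]

def ssub (e f : Sym2 (Fin n)) : Prop := lo f ≤ lo e ∧ hi e ≤ hi f ∧ len e < len f

lemma ssub_trans {e f g : Sym2 (Fin n)} (h1 : ssub e f) (h2 : ssub f g) : ssub e g := by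
  obtain ⟨a1, a2, a3⟩ := h1; obtain ⟨b1, b2, b3⟩ := h2
  exact ⟨le_trans b1 a1, le_trans a2 b2, lt_trans a3 b3⟩

lemma ssub_gaps {e f : Sym2 (Fin n)} (h : ssub e f) : gaps e ⊆ gaps f :=
  Finset.Ioc_subset_Ioc h.1 h.2.1

lemma ssub_ne {e f : Sym2 (Fin n)} (h : ssub e f) : e ≠ f := by
  intro he; rw [he] at h; exact lt_irrefl _ h.2.2

section Comb

variable (E : Finset (Sym2 (Fin n)))

noncomputable def cc (i : ℕ) : ℕ := (E.filter (fun e => lo e < i ∧ i ≤ hi e)).card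
noncomputable def dep (e : Sym2 (Fin n)) : ℕ := (E.filter (fun f => ssub e f)).card
noncomputable def levl (k : ℕ) : Finset (Sym2 (Fin n)) := E.filter (fun e => dep E e = k)
noncomputable def levsum (k : ℕ) : ℕ := ∑ e ∈ levl E k, len e

noncomputable def parE (e : Sym2 (Fin n)) : Sym2 (Fin n) :=
  if h : ∃ p, p ∈ E ∧ ssub e p ∧ dep E p + 1 = dep E e then h.choose else e

variable {E}
variable (hlh : ∀ e ∈ E, lo e < hi e)
variable (hnc : ∀ e ∈ E, ∀ f ∈ E, ∀ i : ℕ, lo e < i → i ≤ hi e → lo f < i → i ≤ hi f →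
    (lo f ≤ lo e ∧ hi e ≤ hi f) ∨ (lo e ≤ lo f ∧ hi f ≤ hi e))
variable (hnt : ∀ p ∈ E, ∀ C ⊆ E, p ∉ C → (∀ e ∈ C, gaps e ⊆ gaps p) →
    ((C : Set (Sym2 (Fin n))).Pairwise fun e f => Disjoint (gaps e) (gaps f)) →
    C.biUnion gaps ≠ gaps p)

include hnc in
lemma chain {e f : Sym2 (Fin n)} (he : e ∈ E) (hf : f ∈ E) (hne : e ≠ f) {i : ℕ}
    (h1 : lo e < i) (h2 : i ≤ hi e) (h3 : lo f < i) (h4 : i ≤ hi f) :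
    ssub e f ∨ ssub f e := by
  have hpair : ¬ (lo e = lo f ∧ hi e = hi f) := by
    rintro ⟨p1, p2⟩; exact hne (eq_of_lohi p1 p2)
  rcases hnc e he f hf i h1 h2 h3 h4 with ⟨a1, a2⟩ | ⟨a1, a2⟩
  · left; exact ⟨a1, a2, by unfold len; omega⟩
  · right; exact ⟨a1, a2, by unfold len; omega⟩

lemma dep_lt {e f : Sym2 (Fin n)} (he : e ∈ E) (hf : f ∈ E) (h : ssub e f) :
    dep E f < dep E e := by
  apply Finset.card_lt_card
  have hsub : E.filter (fun g => ssub f g) ⊆ E.filter (fun g => ssub e g) := by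
    intro g hg
    rw [Finset.mem_filter] at hg ⊢
    exact ⟨hg.1, ssub_trans h hg.2⟩
  rw [Finset.ssubset_iff_of_subset hsub]
  refine ⟨f, Finset.mem_filter.mpr ⟨hf, h⟩, fun hmem => ?_⟩
  have := (Finset.mem_filter.mp hmem).2
  exact absurd this.2.2 (lt_irrefl _)

include hlh hnc in
lemma parent {e : Sym2 (Fin n)} {k : ℕ} (he : e ∈ E) (hd : dep E e = k + 1) :
    ∃ p ∈ E, ssub e p ∧ dep E p = k := by
  classical
  have hne : (E.filter (fun f => ssub e f)).Nonempty := by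
    rw [← Finset.card_pos, ← dep, hd]; omega
  obtain ⟨p, hp, hmin⟩ := Finset.exists_min_image _ len hne
  rw [Finset.mem_filter] at hp
  refine ⟨p, hp.1, hp.2, ?_⟩
  have hfil : E.filter (fun f => ssub p f) = (E.filter (fun f => ssub e f)).erase p := by
    ext g
    rw [Finset.mem_erase, Finset.mem_filter, Finset.mem_filter]
    constructor
    · rintro ⟨hg, hsg⟩
      exact ⟨(ssub_ne hsg).symm, ⟨hg, ssub_trans hp.2 hsg⟩⟩
    · rintro ⟨hgne, hg, hsg⟩
      refine ⟨hg, ?_⟩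
      have h1 : lo e < lo e + 1 := by omega
      have h2 : lo e + 1 ≤ hi e := hlh e he
      have hpg : lo p < lo e + 1 := by have := hp.2.1; omega
      have hpg2 : lo e + 1 ≤ hi p := le_trans h2 hp.2.2.1
      have hgg : lo g < lo e + 1 := by have := hsg.1; omega
      have hgg2 : lo e + 1 ≤ hi g := le_trans h2 hsg.2.1
      rcases chain hnc hg hp.1 hgne hgg hgg2 hpg hpg2 with hh | hh
      · exfalso
        have := hmin g (Finset.mem_filter.mpr ⟨hg, hsg⟩)
        have := hh.2.2
        omega
      · exact hh
  unfold dep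
  rw [hfil, Finset.card_erase_of_mem (Finset.mem_filter.mpr ⟨hp.1, hp.2⟩)]
  rw [← dep, hd]
  omega

include hlh hnc in
lemma ancestor {e : Sym2 (Fin n)} (he : e ∈ E) :
    ∀ j ≤ dep E e, ∃ f ∈ E, dep E f = j ∧ gaps e ⊆ gaps f := by
  generalize hk : dep E e = k
  induction k generalizing e with
  | zero =>
    intro j hj
    exact ⟨e, he, by omega, le_refl _⟩
  | succ k ih =>
    intro j hj
    rcases Nat.eq_or_lt_of_le hj with h1 | h1
    · exact ⟨e, he, by omega, le_refl _⟩
    · obtain ⟨p, hp, hsp, hdp⟩ := parent hlh hnc he hk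
      obtain ⟨f, hf, hdf, hgf⟩ := ih hp hdp j (by omega)
      exact ⟨f, hf, hdf, le_trans (ssub_gaps hsp) hgf⟩

include hnc in
lemma samelevel_disj {e f : Sym2 (Fin n)} (he : e ∈ E) (hf : f ∈ E) (hne : e ≠ f)
    (hd : dep E e = dep E f) : Disjoint (gaps e) (gaps f) := by
  rw [Finset.disjoint_left]
  intro i hie hif
  rw [gaps, Finset.mem_Ioc] at hie hif
  rcases chain hnc he hf hne hie.1 hie.2 hif.1 hif.2 with hh | hh
  · have := dep_lt he hf hh; omega
  · have := dep_lt hf he hh; omega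

lemma len_eq_card_gaps (e : Sym2 (Fin n)) : len e = (gaps e).card := by
  rw [gaps, Nat.card_Ioc]; rfl

include hnc in
lemma levsum_le (hn : 1 ≤ n) (k : ℕ) : levsum E k ≤ n - 1 := by
  have hdisj : ∀ e ∈ levl E k, ∀ f ∈ levl E k, e ≠ f → Disjoint (gaps e) (gaps f) := by
    intro e he f hf hne
    rw [levl, Finset.mem_filter] at he hf
    exact samelevel_disj hnc he.1 hf.1 hne (by omega)
  have hcard : levsum E k = ((levl E k).biUnion gaps).card := by
    rw [Finset.card_biUnion hdisj, levsum]
    exact Finset.sum_congr rfl fun e _ => len_eq_card_gaps e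
  rw [hcard]
  have hsub : (levl E k).biUnion gaps ⊆ Finset.Ioc 0 (n-1) := by
    intro i hi
    rw [Finset.mem_biUnion] at hi
    obtain ⟨e, _, hie⟩ := hi
    rw [gaps, Finset.mem_Ioc] at hie
    have : hi e ≤ n - 1 := by
      have := (hiV e).isLt; unfold hi; omega
    simp; omega
  calc ((levl E k).biUnion gaps).card ≤ (Finset.Ioc 0 (n-1)).card := Finset.card_le_card hsub
    _ = n - 1 := by rw [Nat.card_Ioc]; omega

include hlh hnc in
lemma parE_spec {e : Sym2 (Fin n)} {k : ℕ} (he : e ∈ E) (hd : dep E e = k + 1) :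
    parE E e ∈ E ∧ ssub e (parE E e) ∧ dep E (parE E e) = k := by
  obtain ⟨p, hp, hsp, hdp⟩ := parent hlh hnc he hd
  have hex : ∃ q, q ∈ E ∧ ssub e q ∧ dep E q + 1 = dep E e := ⟨p, hp, hsp, by omega⟩
  rw [parE, dif_pos hex]
  obtain ⟨h1, h2, h3⟩ := hex.choose_spec
  exact ⟨h1, h2, by omega⟩

include hlh hnc hnt in
lemma levstep (hn : 1 ≤ n) {k : ℕ} (hne : (levl E (k+1)).Nonempty) :
    levsum E (k+1) + 1 ≤ levsum E k := by
  have hmaps : ∀ e ∈ levl E (k+1), parE E e ∈ levl E k := by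
    intro e he
    rw [levl, Finset.mem_filter] at he ⊢
    obtain ⟨h1, h2, h3⟩ := parE_spec hlh hnc he.1 he.2
    exact ⟨h1, h3⟩
  have hfib := Finset.sum_fiberwise_of_maps_to hmaps len
  have hperle : ∀ p ∈ levl E k,
      (∑ e ∈ (levl E (k+1)).filter (fun e => parE E e = p), len e)
        = (((levl E (k+1)).filter (fun e => parE E e = p)).biUnion gaps).card ∧
      ((((levl E (k+1)).filter (fun e => parE E e = p)).biUnion gaps) ⊆ gaps p) ∧
      (((levl E (k+1)).filter (fun e => parE E e = p)).biUnion gaps ≠ gaps p) := by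
    intro p hp
    set F := (levl E (k+1)).filter (fun e => parE E e = p) with hF
    have hpE : p ∈ E ∧ dep E p = k := by
      rw [levl, Finset.mem_filter] at hp; exact hp
    have hFprop : ∀ e ∈ F, e ∈ E ∧ dep E e = k + 1 ∧ ssub e p := by
      intro e heF
      rw [hF, Finset.mem_filter, levl, Finset.mem_filter] at heF
      obtain ⟨⟨h1, h2⟩, h3⟩ := heF
      obtain ⟨_, hs, _⟩ := parE_spec hlh hnc h1 h2
      rw [h3] at hs
      exact ⟨h1, h2, hs⟩
    have hdisj : ∀ e ∈ F, ∀ f ∈ F, e ≠ f → Disjoint (gaps e) (gaps f) := by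
      intro e he f hf hne'
      obtain ⟨he1, he2, _⟩ := hFprop e he
      obtain ⟨hf1, hf2, _⟩ := hFprop f hf
      exact samelevel_disj hnc he1 hf1 hne' (by omega)
    refine ⟨?_, ?_, ?_⟩
    · rw [Finset.card_biUnion hdisj]
      exact Finset.sum_congr rfl fun e _ => len_eq_card_gaps e
    · intro i hi
      rw [Finset.mem_biUnion] at hi
      obtain ⟨e, heF, hie⟩ := hi
      exact ssub_gaps (hFprop e heF).2.2 hie
    · apply hnt p hpE.1 F
      · intro e heF; exact (hFprop e heF).1
      · intro hpF
        have := (hFprop p hpF).2.1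
        omega
      · intro e heF; exact ssub_gaps (hFprop e heF).2.2
      · intro e he f hf hne'
        exact hdisj e he f hf hne'
  obtain ⟨e0, he0⟩ := hne
  have hp0 : parE E e0 ∈ levl E k := hmaps e0 he0
  have hfibsum : levsum E (k+1)
      = ∑ p ∈ levl E k, ∑ e ∈ (levl E (k+1)).filter (fun e => parE E e = p), len e := by
    rw [hfib]; rfl
  have hstrict : (∑ e ∈ (levl E (k+1)).filter (fun e => parE E e = (parE E e0)), len e) + 1
      ≤ len (parE E e0) := by
    obtain ⟨hcardeq, hsub, hne'⟩ := hperle _ hp0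
    have hss : (((levl E (k+1)).filter (fun e => parE E e = (parE E e0))).biUnion gaps) ⊂ gaps (parE E e0) :=
      ssubset_of_subset_of_ne hsub hne'
    have := Finset.card_lt_card hss
    rw [len_eq_card_gaps]
    omega
  have hrest : ∀ p ∈ (levl E k).erase (parE E e0),
      (∑ e ∈ (levl E (k+1)).filter (fun e => parE E e = p), len e) ≤ len p := by
    intro p hp
    obtain ⟨hcardeq, hsub, _⟩ := hperle p (Finset.mem_of_mem_erase hp)
    rw [hcardeq, len_eq_card_gaps]
    exact Finset.card_le_card hsub
  have hsplit1 : (∑ p ∈ levl E k, ∑ e ∈ (levl E (k+1)).filter (fun e => parE E e = p), len e)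
      = (∑ e ∈ (levl E (k+1)).filter (fun e => parE E e = (parE E e0)), len e)
        + ∑ p ∈ (levl E k).erase (parE E e0), ∑ e ∈ (levl E (k+1)).filter (fun e => parE E e = p), len e :=
    (Finset.add_sum_erase _ _ hp0).symm
  have hsplit2 : levsum E k = len (parE E e0) + ∑ p ∈ (levl E k).erase (parE E e0), len p :=
    (Finset.add_sum_erase _ _ hp0).symm
  have hsum_rest := Finset.sum_le_sum hrest
  omega

include hlh hnc hnt in
lemma levbound (hn : 1 ≤ n) : ∀ k : ℕ, (levl E k).Nonempty → levsum E k + k ≤ n - 1 := by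
  intro k
  induction k with
  | zero => intro _; simpa using levsum_le hnc hn 0
  | succ k ih =>
    intro hne
    obtain ⟨e0, he0⟩ := hne
    have hmem := Finset.mem_filter.mp he0
    obtain ⟨h1, h2, h3⟩ := parE_spec hlh hnc hmem.1 hmem.2
    have hlev : parE E e0 ∈ levl E k := Finset.mem_filter.mpr ⟨h1, h3⟩
    have hihk := ih ⟨_, hlev⟩
    have hstep := levstep hlh hnc hnt hn ⟨e0, he0⟩
    omega

include hlh hnc hnt in
lemma Sm_card (hn : 1 ≤ n) {m : ℕ} (hm : 1 ≤ m) :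
    ((Finset.Icc 1 (n-1)).filter (fun i => m ≤ cc E i)).card ≤ n - m := by
  set S := (Finset.Icc 1 (n-1)).filter (fun i => m ≤ cc E i) with hS
  rcases Finset.eq_empty_or_nonempty S with hemp | hne
  · rw [hemp]; simp
  · have hkey : ∀ i ∈ S, ∃ f ∈ levl E (m-1), i ∈ gaps f := by
      intro i hiS
      rw [hS, Finset.mem_filter] at hiS
      obtain ⟨hiIcc, hcc⟩ := hiS
      have hEine : (E.filter (fun e => lo e < i ∧ i ≤ hi e)).Nonempty := by
        rw [← Finset.card_pos]
        have : (E.filter (fun e => lo e < i ∧ i ≤ hi e)).card = cc E i := rfl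
        omega
      obtain ⟨e, heEi, hmin⟩ := Finset.exists_min_image _ len hEine
      rw [Finset.mem_filter] at heEi
      have hdepe : m - 1 ≤ dep E e := by
        have hsub : (E.filter (fun f => lo f < i ∧ i ≤ hi f)).erase e
            ⊆ E.filter (fun f => ssub e f) := by
          intro f hf
          have hfne := Finset.ne_of_mem_erase hf
          have hfmem := Finset.mem_of_mem_erase hf
          rw [Finset.mem_filter] at hfmem ⊢
          refine ⟨hfmem.1, ?_⟩
          rcases chain hnc heEi.1 hfmem.1 (Ne.symm hfne) heEi.2.1 heEi.2.2 hfmem.2.1 hfmem.2.2 with hh | hh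
          · exact hh
          · exfalso
            have := hmin f (Finset.mem_filter.mpr hfmem)
            have := hh.2.2
            omega
        have hc1 := Finset.card_le_card hsub
        rw [Finset.card_erase_of_mem (Finset.mem_filter.mpr heEi)] at hc1
        have : (E.filter (fun f => lo f < i ∧ i ≤ hi f)).card = cc E i := rfl
        unfold dep
        omega
      obtain ⟨f, hf, hdf, hgf⟩ := ancestor hlh hnc heEi.1 (m-1) hdepe
      refine ⟨f, Finset.mem_filter.mpr ⟨hf, hdf⟩, hgf ?_⟩
      rw [gaps, Finset.mem_Ioc]
      exact heEi.2
    have hsub : S ⊆ (levl E (m-1)).biUnion gaps := by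
      intro i hiS
      rw [Finset.mem_biUnion]
      exact hkey i hiS
    obtain ⟨i0, hi0⟩ := hne
    obtain ⟨f0, hf0, _⟩ := hkey i0 hi0
    have hlevne : (levl E (m-1)).Nonempty := ⟨f0, hf0⟩
    have hbound := levbound hlh hnc hnt hn (m-1) hlevne
    calc S.card ≤ ((levl E (m-1)).biUnion gaps).card := Finset.card_le_card hsub
      _ ≤ ∑ e ∈ levl E (m-1), (gaps e).card := Finset.card_biUnion_le
      _ = levsum E (m-1) := (Finset.sum_congr rfl fun e _ => (len_eq_card_gaps e).symm)
      _ ≤ n - m := by omega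

end Comb

section Graph

lemma edge_adj {d : ℕ} {T : SimpleGraph (Fin (d+2))} {e : Sym2 (Fin (d+2))}
    (he : e ∈ T.edgeSet) : T.Adj (loV e) (hiV e) := by
  induction e with
  | _ a b =>
    rw [SimpleGraph.mem_edgeSet] at he
    rcases le_total a b with h | h
    · rwa [loV_mk, hiV_mk, min_eq_left h, max_eq_right h]
    · rw [loV_mk, hiV_mk, min_eq_right h, max_eq_left h]
      exact he.symm

lemma edge_lo_lt_hi {d : ℕ} {T : SimpleGraph (Fin (d+2))} {e : Sym2 (Fin (d+2))}
    (he : e ∈ T.edgeSet) : lo e < hi e := by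
  have hadj := edge_adj he
  have hne : loV e ≠ hiV e := hadj.ne
  have hle := loV_le_hiV e
  have : loV e < hiV e := lt_of_le_of_ne hle hne
  exact this

lemma vert_mem {d : ℕ} (z x : Fin (d+2)) : loV s(z,x) = z ∨ hiV s(z,x) = z := by
  rcases le_total z x with h | h
  · left; rw [loV_mk, min_eq_left h]
  · right; rw [hiV_mk, max_eq_left h]

lemma noncross {d : ℕ} {T : SimpleGraph (Fin (d+2))}
    (hcross : ∀ a c b e : Fin (d + 2), a < c → c < b → b < e → ¬ (T.Adj a b ∧ T.Adj c e))
    {e f : Sym2 (Fin (d+2))} (he : e ∈ T.edgeSet) (hf : f ∈ T.edgeSet) (i : ℕ)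
    (h1 : lo e < i) (h2 : i ≤ hi e) (h3 : lo f < i) (h4 : i ≤ hi f) :
    (lo f ≤ lo e ∧ hi e ≤ hi f) ∨ (lo e ≤ lo f ∧ hi f ≤ hi e) := by
  by_contra hcon
  push_neg at hcon
  have hcase : (lo e < lo f ∧ hi e < hi f) ∨ (lo f < lo e ∧ hi f < hi e) := by omega
  rcases hcase with ⟨hc1, hc2⟩ | ⟨hc1, hc2⟩
  · refine hcross (loV e) (loV f) (hiV e) (hiV f) ?_ ?_ ?_ ⟨edge_adj he, edge_adj hf⟩
    · rw [Fin.lt_def]; exact hc1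
    · rw [Fin.lt_def]; show lo f < hi e; omega
    · rw [Fin.lt_def]; exact hc2
  · refine hcross (loV f) (loV e) (hiV f) (hiV e) ?_ ?_ ?_ ⟨edge_adj hf, edge_adj he⟩
    · rw [Fin.lt_def]; exact hc1
    · rw [Fin.lt_def]; show lo e < hi f; omega
    · rw [Fin.lt_def]; exact hc2

lemma noTile {d : ℕ} {T : SimpleGraph (Fin (d+2))} (hT : T.IsTree)
    {E : Finset (Sym2 (Fin (d+2)))} (hE : ∀ e, e ∈ E ↔ e ∈ T.edgeSet) :
    ∀ p ∈ E, ∀ C ⊆ E, p ∉ C → (∀ e ∈ C, gaps e ⊆ gaps p) →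
    ((C : Set (Sym2 (Fin (d+2)))).Pairwise fun e f => Disjoint (gaps e) (gaps f)) →
    C.biUnion gaps ≠ gaps p := by
  intro p hp C hCE hpC hsub hdisj heq
  have hlh : ∀ e ∈ E, lo e < hi e := fun e he => edge_lo_lt_hi ((hE e).mp he)
  have hadj : T.Adj (loV p) (hiV p) := edge_adj ((hE p).mp hp)
  have hbridge := (SimpleGraph.isAcyclic_iff_forall_adj_isBridge.mp hT.IsAcyclic) hadj
  rw [SimpleGraph.isBridge_iff] at hbridge
  set G' := T \ SimpleGraph.fromEdgeSet {s(loV p, hiV p)} with hG'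
  have hb : ∀ e ∈ C, lo p ≤ lo e ∧ hi e ≤ hi p := by
    intro e heC
    have h1 : lo e + 1 ∈ gaps e := by
      rw [gaps, Finset.mem_Ioc]; exact ⟨by omega, hlh e (hCE heC)⟩
    have h2 : hi e ∈ gaps e := by
      rw [gaps, Finset.mem_Ioc]; exact ⟨hlh e (hCE heC), le_refl _⟩
    have h3 := hsub e heC h1
    have h4 := hsub e heC h2
    rw [gaps, Finset.mem_Ioc] at h3 h4
    omega
  have hedge' : ∀ e ∈ C, G'.Adj (loV e) (hiV e) := by
    intro e heC
    rw [hG', SimpleGraph.sdiff_adj]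
    refine ⟨edge_adj ((hE e).mp (hCE heC)), ?_⟩
    rw [SimpleGraph.fromEdgeSet_adj]
    rintro ⟨hmem, -⟩
    rw [Set.mem_singleton_iff] at hmem
    have heqp : e = p := by rw [edge_repr e, edge_repr p, hmem]
    exact hpC (heqp ▸ heC)
  have key : ∀ v : ℕ, ∀ e ∈ C, lo e < v → v ≤ hi e → G'.Reachable (loV p) (hiV e) := by
    intro v
    induction v using Nat.strong_induction_on with
    | _ v ih =>
      intro e heC hlt hle
      rcases Nat.eq_or_lt_of_le (hb e heC).1 with hcase | hcase
      · have hveq : loV e = loV p := Fin.ext hcase.symm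
        exact hveq ▸ (hedge' e heC).reachable
      · have hain : lo e ∈ gaps p := by
          rw [gaps, Finset.mem_Ioc]
          have := (hb e heC).2
          have := hlh e (hCE heC)
          omega
        rw [← heq, Finset.mem_biUnion] at hain
        obtain ⟨e', he'C, he'mem⟩ := hain
        rw [gaps, Finset.mem_Ioc] at he'mem
        have hhie' : hi e' = lo e := by
          by_contra hne'
          have h1 : lo e + 1 ∈ gaps e' := by rw [gaps, Finset.mem_Ioc]; omega
          have h2 : lo e + 1 ∈ gaps e := by
            rw [gaps, Finset.mem_Ioc]; exact ⟨by omega, hlh e (hCE heC)⟩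
          have hne : e' ≠ e := by
            intro h; rw [h] at he'mem; omega
          exact Finset.disjoint_left.mp (hdisj (Finset.mem_coe.mpr he'C) (Finset.mem_coe.mpr heC) hne) h1 h2
        have hreach' := ih (lo e) (by omega) e' he'C he'mem.1 (by omega)
        have hveq : hiV e' = loV e := Fin.ext hhie'
        rw [hveq] at hreach'
        exact hreach'.trans (hedge' e heC).reachable
  have hfin : hi p ∈ gaps p := by
    rw [gaps, Finset.mem_Ioc]; exact ⟨hlh p hp, le_refl _⟩
  rw [← heq, Finset.mem_biUnion] at hfin
  obtain ⟨e1, he1C, hmem1⟩ := hfin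
  rw [gaps, Finset.mem_Ioc] at hmem1
  have hr := key (hi p) e1 he1C hmem1.1 hmem1.2
  have hveq : hiV e1 = hiV p := Fin.ext (le_antisymm (hb _ he1C).2 hmem1.2)
  rw [hveq] at hr
  exact hbridge hr

lemma xcoord_mono {d : ℕ} : Monotone (xcoord d) := by
  intro a b hab
  exact Finset.sum_le_sum_of_subset (Finset.Icc_subset_Icc_right hab)

lemma flatLen_eq (d : ℕ) (T : SimpleGraph (Fin (d+2))) [Fintype ↑T.edgeSet] :
    flatLen d T = ∑ e ∈ T.edgeFinset, (xcoord d (hi e) - xcoord d (lo e)) := by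
  rw [flatLen, ← SimpleGraph.coe_edgeFinset, finsum_mem_coe_finset]
  refine Finset.sum_congr rfl (fun e he => ?_)
  induction e with
  | _ a b =>
    simp only [Sym2.lift_mk]
    rcases le_total a b with h | h
    · have hx : xcoord d a.val ≤ xcoord d b.val := xcoord_mono h
      rw [max_eq_right hx, min_eq_left hx]
      unfold hi lo
      rw [loV_mk, hiV_mk, min_eq_left h, max_eq_right h]
    · have hx : xcoord d b.val ≤ xcoord d a.val := xcoord_mono h
      rw [max_eq_left hx, min_eq_right hx]
      unfold hi lo
      rw [loV_mk, hiV_mk, min_eq_right h, max_eq_left h]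

lemma sum_edges (d : ℕ) (E : Finset (Sym2 (Fin (d+2)))) (hlh : ∀ e ∈ E, lo e < hi e) :
    ∑ e ∈ E, (xcoord d (hi e) - xcoord d (lo e))
      = ∑ i ∈ Finset.Icc 1 (d+1), (cc E i) * gapseq d i := by
  have hterm : ∀ e ∈ E, xcoord d (hi e) - xcoord d (lo e)
      = ∑ i ∈ Finset.Ioc (lo e) (hi e), gapseq d i := by
    intro e he
    have h1 : xcoord d (hi e) = xcoord d (lo e) + ∑ i ∈ Finset.Ioc (lo e) (hi e), gapseq d i := by
      unfold xcoord
      have e1 : Finset.Icc 1 (lo e) = Finset.Ioc 0 (lo e) := by ext x; simp; omega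
      have e2 : Finset.Icc 1 (hi e) = Finset.Ioc 0 (hi e) := by ext x; simp; omega
      rw [e1, e2, Finset.sum_Ioc_consecutive _ (Nat.zero_le (lo e)) (le_of_lt (hlh e he))]
    omega
  rw [Finset.sum_congr rfl hterm]
  have hIoc : ∀ e ∈ E, (∑ i ∈ Finset.Ioc (lo e) (hi e), gapseq d i)
      = ∑ i ∈ Finset.Icc 1 (d+1), if lo e < i ∧ i ≤ hi e then gapseq d i else 0 := by
    intro e he
    rw [← Finset.sum_filter]
    congr 1
    have hhib : hi e ≤ d+1 := by
      have := (hiV e).isLt; unfold hi; omega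
    ext i
    simp only [Finset.mem_Ioc, Finset.mem_filter, Finset.mem_Icc]
    omega
  rw [Finset.sum_congr rfl hIoc, Finset.sum_comm]
  refine Finset.sum_congr rfl fun i _ => ?_
  rw [← Finset.sum_filter, Finset.sum_const, smul_eq_mul]
  rfl

lemma gstep_left (d v : ℕ) (hv1 : 1 ≤ v) (hv2 : v + 1 ≤ d + 1) :
    gapseq d (v+1) ≤ gapseq d v + 2 := by
  unfold gapseq; split_ifs <;> omega

lemma gstep_right (d v : ℕ) (hv1 : 1 ≤ v) (hv2 : v + 1 ≤ d + 1) :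
    gapseq d v ≤ gapseq d (v+1) + 2 := by
  unfold gapseq; split_ifs <;> omega

lemma pred_vertex {V : Type*} {G : SimpleGraph V} (hc : G.Connected) (v0 v : V) (k : ℕ)
    (h : G.dist v0 v = k + 1) : ∃ v', G.Adj v' v ∧ G.dist v0 v' = k := by
  obtain ⟨p, hp⟩ := (hc v0 v).exists_walk_length_eq_dist
  have hql : p.reverse.length = k + 1 := by
    rw [SimpleGraph.Walk.length_reverse, hp, h]
  cases hq : p.reverse with
  | nil => rw [hq] at hql; simp at hql
  | cons huv q' =>
    rename_i x
    rw [hq] at hql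
    simp only [SimpleGraph.Walk.length_cons] at hql
    refine ⟨x, huv.symm, ?_⟩
    have hle : G.dist v0 x ≤ k := by
      have := SimpleGraph.dist_le q'.reverse
      rw [SimpleGraph.Walk.length_reverse] at this
      omega
    have htri := hc.dist_triangle (u := v0) (v := x) (w := v)
    have hxv : G.dist x v ≤ 1 := by
      have := SimpleGraph.dist_le (huv.symm.toWalk)
      simpa using this
    omega

end Graph

noncomputable def degE {n : ℕ} (E : Finset (Sym2 (Fin n))) (v : Fin n) : ℕ :=
  (E.filter (fun e => loV e = v ∨ hiV e = v)).card

theorem main (d : ℕ) (hd : 2 ≤ d) :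
    (6 * ∑ i ∈ Finset.Icc 1 (d + 1), i ^ 2 = (d + 1) * (d + 2) * (2 * d + 3)) ∧
    ∀ T : SimpleGraph (Fin (d + 2)), T.IsTree →
      (∀ a c b e : Fin (d + 2), a < c → c < b → b < e → ¬ (T.Adj a b ∧ T.Adj c e)) →
      (∀ u v : Fin (d + 2), T.dist u v ≤ d) →
      6 * flatLen d T + 6 ≤ (d + 1) * (d + 2) * (2 * d + 3) := by
  have hpart1 : 6 * ∑ i ∈ Finset.Icc 1 (d + 1), i ^ 2 = (d + 1) * (d + 2) * (2 * d + 3) := by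
    have h := six_sq (d+1)
    have hr : (d+1) * (d+1+1) * (2*(d+1)+1) = (d+1)*(d+2)*(2*d+3) := by ring
    omega
  refine ⟨hpart1, ?_⟩
  intro T hT hcross hdist
  classical
  letI : Fintype ↑T.edgeSet := Fintype.ofFinite _
  suffices hlt : flatLen d T < ∑ i ∈ Finset.Icc 1 (d + 1), i ^ 2 by omega
  set E := T.edgeFinset with hEdef
  have hmemE : ∀ e, e ∈ E ↔ e ∈ T.edgeSet := fun e => SimpleGraph.mem_edgeFinset
  have hcardE : E.card = d + 1 := by
    rw [hEdef]
    have := hT.card_edgeFinset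
    rw [Fintype.card_fin] at this
    omega
  have hlh : ∀ e ∈ E, lo e < hi e := fun e he => edge_lo_lt_hi ((hmemE e).mp he)
  have hnc : ∀ e ∈ E, ∀ f ∈ E, ∀ i : ℕ, lo e < i → i ≤ hi e → lo f < i → i ≤ hi f →
      (lo f ≤ lo e ∧ hi e ≤ hi f) ∨ (lo e ≤ lo f ∧ hi f ≤ hi e) :=
    fun e he f hf i h1 h2 h3 h4 =>
      noncross hcross ((hmemE e).mp he) ((hmemE f).mp hf) i h1 h2 h3 h4
  have hnt := noTile hT hmemE
  have hFL : flatLen d T = ∑ i ∈ Finset.Icc 1 (d+1), (cc E i) * gapseq d i := by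
    rw [flatLen_eq d T, sum_edges d E hlh]
  have hccle : ∀ i, cc E i ≤ d + 1 := by
    intro i
    calc cc E i ≤ E.card := Finset.card_filter_le _ _
      _ = d + 1 := hcardE
  have hswap : flatLen d T = ∑ m ∈ Finset.Icc 1 (d+1),
      ∑ i ∈ (Finset.Icc 1 (d+1)).filter (fun i => m ≤ cc E i), gapseq d i := by
    rw [hFL]
    have h1 : ∀ i ∈ Finset.Icc 1 (d+1), cc E i * gapseq d i
        = ∑ m ∈ Finset.Icc 1 (d+1), if m ≤ cc E i then gapseq d i else 0 := by
      intro i _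
      rw [← Finset.sum_filter]
      have hfil : (Finset.Icc 1 (d+1)).filter (fun m => m ≤ cc E i) = Finset.Icc 1 (cc E i) := by
        ext m
        simp only [Finset.mem_filter, Finset.mem_Icc]
        have := hccle i
        omega
      rw [hfil, Finset.sum_const, Nat.card_Icc, smul_eq_mul]
      simp [Nat.add_sub_cancel]
    rw [Finset.sum_congr rfl h1, Finset.sum_comm]
    exact Finset.sum_congr rfl fun m _ => (Finset.sum_filter _ _).symm
  -- per-m facts
  have hinj : ∀ (m : ℕ), ∀ x ∈ (Finset.Icc 1 (d+1)).filter (fun i => m ≤ cc E i),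
      ∀ y ∈ (Finset.Icc 1 (d+1)).filter (fun i => m ≤ cc E i),
      gapseq d x = gapseq d y → x = y := by
    intro m x hx y hy hxy
    rw [Finset.mem_filter, Finset.mem_Icc] at hx hy
    exact g_inj d x y hx.1.1 hx.1.2 hy.1.1 hy.1.2 hxy
  have hsubim : ∀ (m : ℕ),
      ((Finset.Icc 1 (d+1)).filter (fun i => m ≤ cc E i)).image (gapseq d)
        ⊆ Finset.Icc 1 (d+1) := by
    intro m j hj
    rw [Finset.mem_image] at hj
    obtain ⟨i, hiS, hgi⟩ := hj
    rw [Finset.mem_filter, Finset.mem_Icc] at hiS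
    have := g_mem d i hiS.1.1 hiS.1.2
    rw [Finset.mem_Icc]; omega
  have hScard : ∀ (m : ℕ), 1 ≤ m →
      ((Finset.Icc 1 (d+1)).filter (fun i => m ≤ cc E i)).card ≤ d + 2 - m := by
    intro m hm
    have h := Sm_card hlh hnc hnt (show 1 ≤ d+2 by omega) hm
    have e0 : d + 2 - 1 = d + 1 := rfl
    rw [e0] at h
    exact h
  have htm : ∀ m ∈ Finset.Icc 1 (d+1),
      (∑ i ∈ (Finset.Icc 1 (d+1)).filter (fun i => m ≤ cc E i), gapseq d i)
        ≤ ∑ j ∈ Finset.Icc m (d+1), j := by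
    intro m hm
    rw [Finset.mem_Icc] at hm
    have hsumim : (∑ j ∈ ((Finset.Icc 1 (d+1)).filter (fun i => m ≤ cc E i)).image (gapseq d), j)
        = ∑ i ∈ (Finset.Icc 1 (d+1)).filter (fun i => m ≤ cc E i), gapseq d i :=
      Finset.sum_image (hinj m)
    have hcardim := Finset.card_image_of_injOn (hinj m)
    have h1 := sum_le_top (d+1) _ (hsubim m)
    have h2 : Finset.Icc (d+1+1-(((Finset.Icc 1 (d+1)).filter (fun i => m ≤ cc E i)).image (gapseq d)).card) (d+1)
        ⊆ Finset.Icc m (d+1) := by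
      apply Finset.Icc_subset_Icc_left
      have := hScard m hm.1
      omega
    calc (∑ i ∈ (Finset.Icc 1 (d+1)).filter (fun i => m ≤ cc E i), gapseq d i)
        = ∑ j ∈ ((Finset.Icc 1 (d+1)).filter (fun i => m ≤ cc E i)).image (gapseq d), j :=
          hsumim.symm
      _ ≤ _ := h1
      _ ≤ ∑ j ∈ Finset.Icc m (d+1), j := Finset.sum_le_sum_of_subset h2
  have hle : flatLen d T ≤ ∑ i ∈ Finset.Icc 1 (d + 1), i ^ 2 := by
    rw [hswap, ← sum_u (d+1)]
    exact Finset.sum_le_sum htm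
  rcases Nat.lt_or_ge (flatLen d T) (∑ i ∈ Finset.Icc 1 (d + 1), i ^ 2) with hcase | hcase
  · exact hcase
  exfalso
  have heq : flatLen d T = ∑ i ∈ Finset.Icc 1 (d + 1), i ^ 2 := le_antisymm hle hcase
  have hsum_eq : (∑ m ∈ Finset.Icc 1 (d+1),
      ∑ i ∈ (Finset.Icc 1 (d+1)).filter (fun i => m ≤ cc E i), gapseq d i)
      = ∑ m ∈ Finset.Icc 1 (d+1), ∑ j ∈ Finset.Icc m (d+1), j := by
    rw [← hswap, heq, ← sum_u (d+1)]
  have halleq := (Finset.sum_eq_sum_iff_of_le htm).mp hsum_eq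
  -- image sets equal to top intervals
  have hAeq : ∀ m ∈ Finset.Icc 1 (d+1),
      ((Finset.Icc 1 (d+1)).filter (fun i => m ≤ cc E i)).image (gapseq d)
        = Finset.Icc m (d+1) := by
    intro m hm
    rw [Finset.mem_Icc] at hm
    have hcardim := Finset.card_image_of_injOn (hinj m)
    have hsumim : (∑ j ∈ ((Finset.Icc 1 (d+1)).filter (fun i => m ≤ cc E i)).image (gapseq d), j)
        = ∑ i ∈ (Finset.Icc 1 (d+1)).filter (fun i => m ≤ cc E i), gapseq d i :=
      Finset.sum_image (hinj m)
    have em : d+1+1-(d+2-m) = m := by omega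
    have h := top_eq (d+2-m) (d+1)
        (((Finset.Icc 1 (d+1)).filter (fun i => m ≤ cc E i)).image (gapseq d))
        (hsubim m) (by have := hScard m hm.1; omega) (by omega) ?_
    · rw [em] at h; exact h
    · rw [em, hsumim]
      exact halleq m (Finset.mem_Icc.mpr hm)
  have hcg : ∀ i, 1 ≤ i → i ≤ d+1 → cc E i = gapseq d i := by
    intro i h1 h2
    have hg := g_mem d i h1 h2
    have hge : gapseq d i ≤ cc E i := by
      have hm : gapseq d i ∈ Finset.Icc 1 (d+1) := Finset.mem_Icc.mpr hg
      have hA := hAeq (gapseq d i) hm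
      have hmem : gapseq d i ∈ Finset.Icc (gapseq d i) (d+1) :=
        Finset.mem_Icc.mpr ⟨le_refl _, hg.2⟩
      rw [← hA, Finset.mem_image] at hmem
      obtain ⟨i', hi'S, hgi'⟩ := hmem
      have hi'f := Finset.mem_filter.mp hi'S
      have hi'I := hi'f.1
      rw [Finset.mem_Icc] at hi'I
      have hii : i' = i := g_inj d i' i hi'I.1 hi'I.2 h1 h2 hgi'
      have := hi'f.2
      rw [hii] at this
      exact this
    by_contra hne
    have hlt2 : gapseq d i < cc E i := by omega
    have hmlt : gapseq d i + 1 ≤ d + 1 := by have := hccle i; omega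
    have hm : gapseq d i + 1 ∈ Finset.Icc 1 (d+1) := Finset.mem_Icc.mpr ⟨by omega, hmlt⟩
    have hA := hAeq (gapseq d i + 1) hm
    have hiS : i ∈ (Finset.Icc 1 (d+1)).filter (fun j => gapseq d i + 1 ≤ cc E j) :=
      Finset.mem_filter.mpr ⟨Finset.mem_Icc.mpr ⟨h1, h2⟩, by omega⟩
    have hmem2 : gapseq d i ∈ Finset.Icc (gapseq d i + 1) (d+1) := by
      rw [← hA]; exact Finset.mem_image_of_mem _ hiS
    rw [Finset.mem_Icc] at hmem2
    omega
  -- the peak gap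
  have hpeak : ∃ i0, (1 ≤ i0 ∧ i0 ≤ d+1) ∧ gapseq d i0 = d+1 := by
    have hm : d+1 ∈ Finset.Icc 1 (d+1) := Finset.mem_Icc.mpr ⟨by omega, le_refl _⟩
    have hA := hAeq (d+1) hm
    have hmem : d+1 ∈ Finset.Icc (d+1) (d+1) := Finset.mem_Icc.mpr ⟨le_refl _, le_refl _⟩
    rw [← hA, Finset.mem_image] at hmem
    obtain ⟨i0, hi0S, hg0⟩ := hmem
    have h := (Finset.mem_filter.mp hi0S).1
    rw [Finset.mem_Icc] at h
    exact ⟨i0, h, hg0⟩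
  obtain ⟨i0, ⟨hi01, hi02⟩, hgi0⟩ := hpeak
  have hcov : ∀ e ∈ E, lo e < i0 ∧ i0 ≤ hi e := by
    have hcceq : cc E i0 = d+1 := by rw [hcg i0 hi01 hi02, hgi0]
    have hfe : E.filter (fun e => lo e < i0 ∧ i0 ≤ hi e) = E :=
      Finset.eq_of_subset_of_card_le (Finset.filter_subset _ _) (by
        rw [hcardE]
        calc d+1 = cc E i0 := hcceq.symm
          _ ≤ _ := le_refl _)
    intro e he
    rw [← hfe] at he
    exact (Finset.mem_filter.mp he).2
  -- degree recurrences
  have hleft : ∀ v : Fin (d+2), v.val < i0 → cc E (v.val+1) = cc E v.val + degE E v := by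
    intro v hv
    have hstep1 : E.filter (fun e => lo e < v.val+1 ∧ v.val+1 ≤ hi e)
        = E.filter (fun e => lo e < v.val+1) := by
      apply Finset.filter_congr
      intro e he
      have h2 := (hcov e he).2
      exact ⟨fun h => h.1, fun h => ⟨h, by omega⟩⟩
    have hstep2 : E.filter (fun e => lo e < v.val ∧ v.val ≤ hi e)
        = E.filter (fun e => lo e < v.val) := by
      apply Finset.filter_congr
      intro e he
      have h2 := (hcov e he).2
      exact ⟨fun h => h.1, fun h => ⟨h, by omega⟩⟩
    have hsplit : E.filter (fun e => lo e < v.val+1)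
        = E.filter (fun e => lo e < v.val) ∪ E.filter (fun e => lo e = v.val) := by
      rw [← Finset.filter_or]
      apply Finset.filter_congr
      intro e he
      constructor
      · intro h; omega
      · intro h; omega
    have hdisj2 : Disjoint (E.filter (fun e => lo e < v.val)) (E.filter (fun e => lo e = v.val)) := by
      rw [Finset.disjoint_left]
      intro e h1 h2
      rw [Finset.mem_filter] at h1 h2
      omega
    have hdeg : E.filter (fun e => lo e = v.val) = E.filter (fun e => loV e = v ∨ hiV e = v) := by
      apply Finset.filter_congr
      intro e he
      have h1 := (hcov e he)
      constructor
      · intro h; left; exact Fin.ext h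
      · intro h
        rcases h with h | h
        · rw [← h]; rfl
        · exfalso
          have hh : hi e = v.val := by rw [← h]; rfl
          omega
    have e1 : cc E (v.val+1) = (E.filter (fun e => lo e < v.val+1 ∧ v.val+1 ≤ hi e)).card := rfl
    have e2 : cc E v.val = (E.filter (fun e => lo e < v.val ∧ v.val ≤ hi e)).card := rfl
    have e3 : degE E v = (E.filter (fun e => loV e = v ∨ hiV e = v)).card := rfl
    rw [e1, e2, e3, hstep1, hstep2, hsplit, Finset.card_union_of_disjoint hdisj2, hdeg]
  have hright : ∀ v : Fin (d+2), i0 ≤ v.val → cc E v.val = cc E (v.val+1) + degE E v := by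
    intro v hv
    have hstep1 : E.filter (fun e => lo e < v.val ∧ v.val ≤ hi e)
        = E.filter (fun e => v.val ≤ hi e) := by
      apply Finset.filter_congr
      intro e he
      have h1 := (hcov e he).1
      exact ⟨fun h => h.2, fun h => ⟨by omega, h⟩⟩
    have hstep2 : E.filter (fun e => lo e < v.val+1 ∧ v.val+1 ≤ hi e)
        = E.filter (fun e => v.val+1 ≤ hi e) := by
      apply Finset.filter_congr
      intro e he
      have h1 := (hcov e he).1
      exact ⟨fun h => h.2, fun h => ⟨by omega, h⟩⟩
    have hsplit : E.filter (fun e => v.val ≤ hi e)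
        = E.filter (fun e => v.val+1 ≤ hi e) ∪ E.filter (fun e => hi e = v.val) := by
      rw [← Finset.filter_or]
      apply Finset.filter_congr
      intro e he
      constructor
      · intro h; omega
      · intro h; omega
    have hdisj2 : Disjoint (E.filter (fun e => v.val+1 ≤ hi e)) (E.filter (fun e => hi e = v.val)) := by
      rw [Finset.disjoint_left]
      intro e h1 h2
      rw [Finset.mem_filter] at h1 h2
      omega
    have hdeg : E.filter (fun e => hi e = v.val) = E.filter (fun e => loV e = v ∨ hiV e = v) := by
      apply Finset.filter_congr
      intro e he
      have h1 := (hcov e he).1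
      constructor
      · intro h; right; exact Fin.ext h
      · intro h
        rcases h with h | h
        · exfalso
          have hh : lo e = v.val := by rw [← h]; rfl
          omega
        · rw [← h]; rfl
    have e1 : cc E (v.val+1) = (E.filter (fun e => lo e < v.val+1 ∧ v.val+1 ≤ hi e)).card := rfl
    have e2 : cc E v.val = (E.filter (fun e => lo e < v.val ∧ v.val ≤ hi e)).card := rfl
    have e3 : degE E v = (E.filter (fun e => loV e = v ∨ hiV e = v)).card := rfl
    rw [e1, e2, e3, hstep1, hstep2, hsplit, Finset.card_union_of_disjoint hdisj2, hdeg]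
  have hcc0 : cc E 0 = 0 := by
    have h0 : E.filter (fun e => lo e < 0 ∧ 0 ≤ hi e) = ∅ :=
      Finset.filter_false_of_mem (fun e _ => by omega)
    have e1 : cc E 0 = (E.filter (fun e => lo e < 0 ∧ 0 ≤ hi e)).card := rfl
    rw [e1, h0, Finset.card_empty]
  have hcc1 : cc E 1 = 1 := by
    rw [hcg 1 (le_refl 1) (by omega)]
    unfold gapseq
    rw [if_pos (by omega)]
  set v0 : Fin (d+2) := (⟨0, by omega⟩ : Fin (d+2)) with hv0def
  have hval0 : v0.val = 0 := rfl
  have hdeg0 : degE E v0 = 1 := by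
    have h := hleft v0 (by rw [hval0]; omega)
    rw [hval0] at h
    norm_num at h
    omega
  have hdeg2 : ∀ v : Fin (d+2), degE E v ≤ 2 := by
    intro v
    by_cases hv : v.val < i0
    · have h := hleft v hv
      by_cases h0 : v.val = 0
      · rw [h0] at h
        norm_num at h
        omega
      · have h1 : 1 ≤ v.val := by omega
        have h2 : v.val + 1 ≤ d+1 := by omega
        have hg1 := hcg (v.val+1) (by omega) h2
        have hg2 := hcg v.val h1 (by omega)
        have hg3 := gstep_left d v.val h1 h2
        omega
    · have h := hright v (by omega)
      by_cases h0 : v.val = d+1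
      · have hcc2 : cc E (d+1+1) = 0 := by
          have h02 : E.filter (fun e => lo e < d+1+1 ∧ d+1+1 ≤ hi e) = ∅ :=
            Finset.filter_false_of_mem (fun e he => by
              have hb := (hiV e).isLt
              have : hi e ≤ d + 1 := by unfold hi; omega
              omega)
          have e1 : cc E (d+1+1) = (E.filter (fun e => lo e < d+1+1 ∧ d+1+1 ≤ hi e)).card := rfl
          rw [e1, h02, Finset.card_empty]
        rw [h0] at h
        have hgN := hcg (d+1) (by omega) (le_refl _)
        have hgval : gapseq d (d+1) = 2 := by
          unfold gapseq
          rw [if_neg (by omega)]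
          omega
        omega
      · have h1 : 1 ≤ v.val := by omega
        have h2 : v.val + 1 ≤ d + 1 := by have := v.isLt; omega
        have hg1 := hcg (v.val+1) (by omega) h2
        have hg2 := hcg v.val h1 (by omega)
        have hg3 := gstep_right d v.val h1 h2
        omega
  -- distance argument
  have hconn : T.Connected := hT.isConnected
  have hpredv : ∀ (v : Fin (d+2)) (k : ℕ), T.dist v0 v = k+1 →
      ∃ v', T.Adj v' v ∧ T.dist v0 v' = k :=
    fun v k h => pred_vertex hconn v0 v k h
  have hdegon : ∀ (z x : Fin (d+2)), T.Adj z x →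
      s(z,x) ∈ E.filter (fun e => loV e = z ∨ hiV e = z) := by
    intro z x hzx
    rw [Finset.mem_filter]
    exact ⟨(hmemE _).mpr (T.mem_edgeSet.mpr hzx), vert_mem z x⟩
  have hnob : ∀ k : ℕ, ∀ v w : Fin (d+2), v ≠ w → T.dist v0 v = k+1 →
      T.dist v0 w = k+1 → False := by
    intro k
    induction k with
    | zero =>
      intro v w hvw hv hw
      obtain ⟨v', hav, hdv⟩ := hpredv v 0 hv
      obtain ⟨w', haw, hdw⟩ := hpredv w 0 hw
      have hv0' : v0 = v' := (hconn.dist_eq_zero_iff).mp hdv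
      have hw0' : v0 = w' := (hconn.dist_eq_zero_iff).mp hdw
      have hadjv : T.Adj v0 v := hv0' ▸ hav
      have hadjw : T.Adj v0 w := hw0' ▸ haw
      have hsub : ({s(v0,v), s(v0,w)} : Finset (Sym2 (Fin (d+2))))
          ⊆ E.filter (fun e => loV e = v0 ∨ hiV e = v0) := by
        intro e he
        rw [Finset.mem_insert, Finset.mem_singleton] at he
        rcases he with rfl | rfl
        · exact hdegon v0 v hadjv
        · exact hdegon v0 w hadjw
      have hc2 : ({s(v0,v), s(v0,w)} : Finset (Sym2 (Fin (d+2)))).card = 2 := by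
        rw [Finset.card_insert_of_notMem (by
          rw [Finset.mem_singleton]
          intro hcon
          exact hvw (Sym2.congr_right.mp hcon)), Finset.card_singleton]
      have hcard := Finset.card_le_card hsub
      rw [hc2] at hcard
      have e3 : (E.filter (fun e => loV e = v0 ∨ hiV e = v0)).card = degE E v0 := rfl
      omega
    | succ k ih =>
      intro v w hvw hv hw
      obtain ⟨v', hav, hdv⟩ := hpredv v (k+1) hv
      obtain ⟨w', haw, hdw⟩ := hpredv w (k+1) hw
      by_cases hvw' : v' = w'
      · subst hvw'
        obtain ⟨u', hau, hdu⟩ := hpredv v' k hdv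
        have hu'v : u' ≠ v := fun hcon => by rw [hcon] at hdu; omega
        have hu'w : u' ≠ w := fun hcon => by rw [hcon] at hdu; omega
        have hne1 : s(v', v) ≠ s(v', w) := fun hcon => hvw (Sym2.congr_right.mp hcon)
        have hne2 : s(v', v) ≠ s(v', u') := fun hcon => hu'v (Sym2.congr_right.mp hcon).symm
        have hne3 : s(v', w) ≠ s(v', u') := fun hcon => hu'w (Sym2.congr_right.mp hcon).symm
        have hsub : ({s(v',v), s(v',w), s(v',u')} : Finset (Sym2 (Fin (d+2))))
            ⊆ E.filter (fun e => loV e = v' ∨ hiV e = v') := by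
          intro e he
          simp only [Finset.mem_insert, Finset.mem_singleton] at he
          rcases he with rfl | rfl | rfl
          · exact hdegon v' v hav
          · exact hdegon v' w haw
          · exact hdegon v' u' hau.symm
        have hc3 : ({s(v',v), s(v',w), s(v',u')} : Finset (Sym2 (Fin (d+2)))).card = 3 := by
          rw [Finset.card_insert_of_notMem (by
                simp only [Finset.mem_insert, Finset.mem_singleton]
                push_neg
                exact ⟨hne1, hne2⟩),
              Finset.card_insert_of_notMem (by
                rw [Finset.mem_singleton]
                exact hne3),
              Finset.card_singleton]
        have hcard := Finset.card_le_card hsub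
        rw [hc3] at hcard
        have hdv2 := hdeg2 v'
        have e3 : (E.filter (fun e => loV e = v' ∨ hiV e = v')).card = degE E v' := rfl
        omega
      · exact ih v' w' hvw' hdv hdw
  have hmaplt : ∀ v : Fin (d+2), T.dist v0 v < d+1 := fun v => by have := hdist v0 v; omega
  obtain ⟨v, w, hvw, hfeq⟩ := Fintype.exists_ne_map_eq_of_card_lt
      (fun v : Fin (d+2) => (⟨T.dist v0 v, hmaplt v⟩ : Fin (d+1)))
      (by simp only [Fintype.card_fin]; omega)
  have hdeq : T.dist v0 v = T.dist v0 w := congrArg Fin.val hfeq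
  have hne0 : T.dist v0 v ≠ 0 := by
    intro h0
    have h1 : v0 = v := (hconn.dist_eq_zero_iff).mp h0
    have h2 : v0 = w := (hconn.dist_eq_zero_iff).mp (by omega)
    exact hvw (h1.symm.trans h2)
  exact hnob (T.dist v0 v - 1) v w hvw (by omega) (by omega)

end Stmt14

/-- For `d ≥ 2`, `Σ_{i=1}^{d+1} i² = (d+1)(d+2)(2d+3)/6`, and on the flat arc
on `d+2` points with gap sequence `(1, 3, 5, …, d+1, …, 6, 4, 2)`, every plane (noncrossing)
spanning tree of diameter at most `d` has length at most `(d+1)(d+2)(2d+3)/6 − 1`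
(the longest plane tree being the unique path of length `Σ_{i=1}^{d+1} i²` and diameter
`d+1`). Stated with both sides multiplied by `6`. -/
theorem stmt_14 (d : ℕ) (hd : 2 ≤ d) :
    (6 * ∑ i ∈ Finset.Icc 1 (d + 1), i ^ 2 = (d + 1) * (d + 2) * (2 * d + 3)) ∧
    ∀ T : SimpleGraph (Fin (d + 2)), T.IsTree →
      (∀ a c b e : Fin (d + 2), a < c → c < b → b < e → ¬ (T.Adj a b ∧ T.Adj c e)) →
      (∀ u v : Fin (d + 2), T.dist u v ≤ d) →
      6 * flatLen d T + 6 ≤ (d + 1) * (d + 2) * (2 * d + 3) :=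
  Stmt14.main d hd
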